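/- Let H and H' be complex Hilbert spaces with dim H ≥ 3, and let T : H → H' be an injective semilinear map (additive and T(λx) = σ(λ)T(x) for a ring homomorphism σ : ℂ → ℂ) such that ⟨x, y⟩ = 0 implies ⟨Tx, Ty⟩ = 0 for all x, y ∈ H. If T is nonzero, then T is a nonzero scalar multiple of a linear or conjugate-linear isometry. -/

import Mathlib

open scoped ComplexConjugate

lemma exists_unit_orth {H : Type} [NormedAddCommGroup H] [InnerProductSpace ℂ H]
    [CompleteSpace H] (hdim : 3 ≤ Module.rank ℂ H) (x y : H) :
    ∃ z : H, ‖z‖ = 1 ∧ inner ℂ z x = (0 : ℂ) ∧ inner ℂ z y = (0 : ℂ) := by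
  set K := Submodule.span ℂ ({x, y} : Set H) with hK
  have hfin : Set.Finite ({x, y} : Set H) := (Set.finite_singleton y).insert x
  have hfd : FiniteDimensional ℂ K := FiniteDimensional.span_of_finite ℂ hfin
  have hne : K ≠ ⊤ := by
    intro h
    have h1 : Module.rank ℂ K ≤ 2 := by
      refine (rank_span_le _).trans ?_
      calc (Cardinal.mk ({x, y} : Set H)) ≤ Cardinal.mk ({y} : Set H) + 1 :=
            Cardinal.mk_insert_le
        _ ≤ 2 := by simp [Cardinal.mk_singleton]; norm_num
    have h2 : Module.rank ℂ H = Module.rank ℂ K := by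
      rw [h]; exact (rank_top ℂ H).symm
    rw [h2] at hdim
    exact absurd (hdim.trans h1) (by norm_num)
  haveI : CompleteSpace K := FiniteDimensional.complete ℂ K
  have horthne : Kᗮ ≠ ⊥ :=
    fun h => hne (Submodule.orthogonal_eq_bot_iff.mp h)
  obtain ⟨z, hzK, hz0⟩ := Submodule.exists_mem_ne_zero_of_ne_bot horthne
  have hzx : inner ℂ z x = (0 : ℂ) :=
    (Submodule.mem_orthogonal' K z).mp hzK x (Submodule.subset_span (by simp))
  have hzy : inner ℂ z y = (0 : ℂ) :=
    (Submodule.mem_orthogonal' K z).mp hzK y (Submodule.subset_span (by simp))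
  refine ⟨((‖z‖⁻¹ : ℝ) : ℂ) • z, ?_, ?_, ?_⟩
  · simp [norm_smul, norm_ne_zero_iff.mpr hz0, inv_mul_cancel₀]
  · rw [inner_smul_left, hzx, mul_zero]
  · rw [inner_smul_left, hzy, mul_zero]


/-- `L : H → H'` is a linear or conjugate-linear isometry. -/
def IsLinOrConjIsometry {H H' : Type}
    [NormedAddCommGroup H] [InnerProductSpace ℂ H]
    [NormedAddCommGroup H'] [InnerProductSpace ℂ H']
    (L : H → H') : Prop :=
  (∃ T : H →ₗᵢ[ℂ] H', ∀ x, L x = T x) ∨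
  (∃ T : H →ₛₗᵢ[starRingEnd ℂ] H', ∀ x, L x = T x)

/-- an injective, orthogonality-preserving, nonzero semilinear map
between complex Hilbert spaces (with `dim H ≥ 3`) is a nonzero scalar multiple of a
linear or conjugate-linear isometry. -/
theorem stmt18 {H H' : Type}
    [NormedAddCommGroup H] [InnerProductSpace ℂ H] [CompleteSpace H]
    [NormedAddCommGroup H'] [InnerProductSpace ℂ H'] [CompleteSpace H']
    (hdim : 3 ≤ Module.rank ℂ H)
    (T : H → H') (σ : ℂ →+* ℂ)
    (hadd : ∀ x y : H, T (x + y) = T x + T y)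
    (hsmul : ∀ (c : ℂ) (x : H), T (c • x) = σ c • T x)
    (hinj : Function.Injective T)
    (horth : ∀ x y : H, inner ℂ x y = (0 : ℂ) → inner ℂ (T x) (T y) = (0 : ℂ))
    (hT : T ≠ 0) :
    ∃ (c : ℂ) (L : H → H'), c ≠ 0 ∧ IsLinOrConjIsometry L ∧ ∀ x : H, T x = c • L x := by
  classical
  have hT0 : T 0 = 0 := by
    have h := hadd 0 0
    rw [add_zero] at h
    exact (left_eq_add.mp h)
  have hne0 : ∀ x : H, x ≠ 0 → T x ≠ 0 := fun x hx h => hx (hinj (h.trans hT0.symm))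
  have hsub : ∀ x y : H, T (x - y) = T x - T y := by
    intro x y
    have h := hadd (x - y) y
    rw [sub_add_cancel] at h
    exact eq_sub_of_add_eq h.symm
  have normEqOrth : ∀ x y : H, ‖x‖ = 1 → ‖y‖ = 1 → inner ℂ x y = (0 : ℂ) →
      ‖T x‖ = ‖T y‖ := by
    intro x y hx hy hxy
    have hyx : inner ℂ y x = (0 : ℂ) := by rw [← inner_conj_symm, hxy, map_zero]
    have hxx : (inner ℂ x x : ℂ) = 1 := by
      rw [inner_self_eq_norm_sq_to_K, hx]; norm_num
    have hyy : (inner ℂ y y : ℂ) = 1 := by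
      rw [inner_self_eq_norm_sq_to_K, hy]; norm_num
    have h1 : inner ℂ (x + y) (x - y) = (0 : ℂ) := by
      rw [inner_sub_right, inner_add_left, inner_add_left, hxy, hyx, hxx, hyy]; ring
    have h2 := horth _ _ h1
    have hTxy := horth x y hxy
    have hTyx := horth y x hyx
    rw [hadd, hsub, inner_sub_right, inner_add_left, inner_add_left, hTxy, hTyx] at h2
    rw [inner_self_eq_norm_sq_to_K, inner_self_eq_norm_sq_to_K] at h2
    simp only [add_zero, zero_add, sub_eq_zero] at h2
    have h4 : ‖T x‖ ^ 2 = ‖T y‖ ^ 2 := by exact_mod_cast h2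
    nlinarith [norm_nonneg (T x), norm_nonneg (T y)]
  have normEqUnit : ∀ x y : H, ‖x‖ = 1 → ‖y‖ = 1 → ‖T x‖ = ‖T y‖ := by
    intro x y hx hy
    obtain ⟨z, hz1, hzx, hzy⟩ := exists_unit_orth hdim x y
    have hxz : inner ℂ x z = (0 : ℂ) := by rw [← inner_conj_symm, hzx, map_zero]
    have hyz : inner ℂ y z = (0 : ℂ) := by rw [← inner_conj_symm, hzy, map_zero]
    rw [normEqOrth x z hx hz1 hxz, ← normEqOrth y z hy hz1 hyz]
  obtain ⟨e, he1, -, -⟩ := exists_unit_orth hdim 0 0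
  have he0 : e ≠ 0 := by intro h; rw [h, norm_zero] at he1; norm_num at he1
  set r := ‖T e‖ with hrdef
  have hr : 0 < r := norm_pos_iff.mpr (hne0 e he0)
  obtain ⟨f, hf1, hfe, -⟩ := exists_unit_orth hdim e e
  have hef : inner ℂ e f = (0 : ℂ) := by rw [← inner_conj_symm, hfe, map_zero]
  have hTfr : ‖T f‖ = r := normEqUnit f e hf1 he1
  have hTef : inner ℂ (T e) (T f) = (0 : ℂ) := horth _ _ hef
  have hTfe : inner ℂ (T f) (T e) = (0 : ℂ) := horth _ _ hfe
  have hee : (inner ℂ e e : ℂ) = 1 := by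
    rw [inner_self_eq_norm_sq_to_K, he1]; norm_num
  have hff : (inner ℂ f f : ℂ) = 1 := by
    rw [inner_self_eq_norm_sq_to_K, hf1]; norm_num
  have hTee : (inner ℂ (T e) (T e) : ℂ) = (r : ℂ) ^ 2 := by
    rw [inner_self_eq_norm_sq_to_K]; norm_cast
  have hTff : (inner ℂ (T f) (T f) : ℂ) = (r : ℂ) ^ 2 := by
    rw [inner_self_eq_norm_sq_to_K, hTfr]; norm_cast
  have hrC : ((r : ℂ)) ^ 2 ≠ 0 := pow_ne_zero _ (by exact_mod_cast hr.ne')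
  have hsconj : ∀ l : ℂ, σ (conj l) = conj (σ l) := by
    intro l
    have h1 : inner ℂ (e + l • f) ((-(conj l)) • e + f) = (0 : ℂ) := by
      rw [inner_add_left, inner_add_right, inner_add_right, inner_smul_left,
        inner_smul_left, inner_smul_right, inner_smul_right, hee, hff, hef, hfe]
      ring
    have h2 := horth _ _ h1
    rw [hadd, hadd, hsmul, hsmul, inner_add_left, inner_add_right, inner_add_right,
      inner_smul_left, inner_smul_left, inner_smul_right, inner_smul_right,
      hTee, hTff, hTef, hTfe, map_neg] at h2
    have h3 : (conj (σ l) - σ (conj l)) * ((r : ℂ)) ^ 2 = 0 := by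
      linear_combination h2
    have h4 := (mul_eq_zero.mp h3).resolve_right hrC
    exact (sub_eq_zero.mp h4).symm
  have him : ∀ t : ℝ, (σ (t : ℂ)).im = 0 := by
    intro t
    have h := hsconj (t : ℂ)
    rw [Complex.conj_ofReal] at h
    exact Complex.conj_eq_iff_im.mp h.symm
  have hreal : ∀ t : ℝ, σ (t : ℂ) = (t : ℂ) := by
    let ρ : ℝ →+* ℝ :=
      { toFun := fun t => (σ (t : ℂ)).re
        map_one' := by simp
        map_zero' := by simp
        map_mul' := by
          intro s t
          rw [Complex.ofReal_mul, map_mul, Complex.mul_re, him, him]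
          ring
        map_add' := by
          intro s t
          rw [Complex.ofReal_add, map_add, Complex.add_re] }
    intro t
    have h1 : ρ t = t := RingHom.congr_fun (Subsingleton.elim ρ (RingHom.id ℝ)) t
    have h2 : (σ (t : ℂ)).re = t := h1
    exact Complex.ext (by simpa using h2) (by simpa using him t)
  have hi2 : (σ Complex.I) ^ 2 = -1 := by
    rw [← map_pow, Complex.I_sq, map_neg, map_one]
  have hi : σ Complex.I = Complex.I ∨ σ Complex.I = -Complex.I := by
    have h3 : (σ Complex.I - Complex.I) * (σ Complex.I + Complex.I) = 0 := by
      linear_combination hi2 - Complex.I_sq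
    rcases mul_eq_zero.mp h3 with h | h
    · exact Or.inl (sub_eq_zero.mp h)
    · exact Or.inr (eq_neg_of_add_eq_zero_left h)
  have hσcases : (∀ z : ℂ, σ z = z) ∨ (∀ z : ℂ, σ z = conj z) := by
    rcases hi with h | h
    · left
      intro z
      conv_lhs => rw [← Complex.re_add_im z]
      rw [map_add, map_mul, hreal, hreal, h, Complex.re_add_im]
    · right
      intro z
      conv_lhs => rw [← Complex.re_add_im z]
      rw [map_add, map_mul, hreal, hreal, h]
      simp [Complex.ext_iff]
  have hnorm : ∀ x : H, ‖T x‖ = r * ‖x‖ := by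
    intro x
    rcases eq_or_ne x 0 with rfl | hx
    · simp [hT0]
    · have hx' : ‖x‖ ≠ 0 := norm_ne_zero_iff.mpr hx
      have hu : ‖(((‖x‖⁻¹ : ℝ) : ℂ)) • x‖ = 1 := by
        rw [norm_smul]
        simp [abs_of_nonneg (inv_nonneg.mpr (norm_nonneg x)), inv_mul_cancel₀ hx']
      have hxe : ((‖x‖ : ℂ)) • ((((‖x‖⁻¹ : ℝ) : ℂ)) • x) = x := by
        rw [smul_smul, ← Complex.ofReal_mul, mul_inv_cancel₀ hx']
        simp
      have h1 : T x = ((‖x‖ : ℂ)) • T ((((‖x‖⁻¹ : ℝ) : ℂ)) • x) := by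
        conv_lhs => rw [← hxe]
        rw [hsmul, hreal]
      rw [h1, norm_smul, normEqUnit _ e hu he1, ← hrdef]
      simp [mul_comm]
  have hcne : ((r : ℂ)) ≠ 0 := by exact_mod_cast hr.ne'
  have hLnorm : ∀ x : H, ‖((r : ℂ))⁻¹ • T x‖ = ‖x‖ := by
    intro x
    rw [norm_smul, hnorm]
    rw [norm_inv, Complex.norm_real, Real.norm_eq_abs, abs_of_pos hr]
    field_simp
  have hTc : ∀ x : H, T x = ((r : ℂ)) • (((r : ℂ))⁻¹ • T x) := by
    intro x
    rw [smul_smul, mul_inv_cancel₀ hcne, one_smul]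
  rcases hσcases with hid | hcj
  · refine ⟨(r : ℂ), fun x => ((r : ℂ))⁻¹ • T x, hcne, Or.inl ?_, hTc⟩
    refine ⟨⟨{ toFun := fun x => ((r : ℂ))⁻¹ • T x
               map_add' := by intro x y; rw [hadd, smul_add]
               map_smul' := by
                 intro c x
                 rw [hsmul, hid, smul_comm]; rfl }, hLnorm⟩, fun x => rfl⟩
  · refine ⟨(r : ℂ), fun x => ((r : ℂ))⁻¹ • T x, hcne, Or.inr ?_, hTc⟩
    refine ⟨⟨{ toFun := fun x => ((r : ℂ))⁻¹ • T x
               map_add' := by intro x y; rw [hadd, smul_add]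
               map_smul' := by
                 intro c x
                 rw [hsmul, hcj, smul_comm] }, hLnorm⟩, fun x => rfl⟩
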